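/- For any real θ and natural numbers m, q, k with q ≤ k < 2m+1−q, the sum (1/(2m+1)) ∑_{ℓ=0}^{2m} (sin((θ+2πℓ)/(2m+1)))^{2k} · cos(2q(θ+2πℓ)/(2m+1)) equals ((−1)^q/4^k)·C(2k, k−q), and for k < q the sum equals 0. -/

import Mathlib

open Real Finset


lemma exp_sum_lem (θ : ℝ) (m : ℕ) (t : ℤ) (ht : t.natAbs < 2*m+1) :
    ∑ ℓ ∈ Finset.range (2*m+1),
      Complex.exp (2*(t:ℂ)*(((θ:ℂ) + 2*(Real.pi:ℂ)*ℓ)/(2*(m:ℂ)+1))*Complex.I)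
    = if t = 0 then (2*(m:ℂ)+1) else 0 := by
  have hN : (2*(m:ℂ)+1) ≠ 0 := by
    have : ((2*m+1 : ℕ) : ℂ) ≠ 0 := Nat.cast_ne_zero.mpr (by omega)
    push_cast at this; convert this using 2
  have step : ∀ ℓ : ℕ, Complex.exp (2*(t:ℂ)*(((θ:ℂ) + 2*(Real.pi:ℂ)*ℓ)/(2*(m:ℂ)+1))*Complex.I)
      = Complex.exp (2*(t:ℂ)*(θ:ℂ)*Complex.I/(2*(m:ℂ)+1)) *
        Complex.exp (4*(Real.pi:ℂ)*(t:ℂ)*Complex.I/(2*(m:ℂ)+1)) ^ ℓ := by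
    intro ℓ
    rw [← Complex.exp_nat_mul, ← Complex.exp_add]
    congr 1
    field_simp
    ring
  simp only [step, ← Finset.mul_sum]
  rcases eq_or_ne t 0 with rfl | ht0
  · simp [Finset.sum_const]
  · rw [if_neg ht0]
    have hρ : Complex.exp (4*(Real.pi:ℂ)*(t:ℂ)*Complex.I/(2*(m:ℂ)+1)) ≠ 1 := by
      intro h
      rw [Complex.exp_eq_one_iff] at h
      obtain ⟨n, hn⟩ := h
      rw [div_eq_iff hN] at hn
      have h2pi : (2*(Real.pi:ℂ)*Complex.I) ≠ 0 := by
        simp [Real.pi_ne_zero, Complex.I_ne_zero, Complex.ofReal_ne_zero]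
      have h3 : (2*(t:ℂ)) = (n:ℂ) * (2*(m:ℂ)+1) :=
        mul_left_cancel₀ h2pi (by linear_combination hn)
      have h4 : 2*t = n*(2*m+1) := by exact_mod_cast h3
      have h5 : ((2*m+1 : ℤ)) ∣ t := by
        have hco : IsCoprime (2*(m:ℤ)+1) 2 := ⟨1, -m, by ring⟩
        have h6 : (2*(m:ℤ)+1) ∣ t * 2 := ⟨n, by linarith⟩
        have := hco.dvd_of_dvd_mul_right h6
        convert this using 2
      have := Int.eq_zero_of_dvd_of_natAbs_lt_natAbs h5 (by rw [show (2*(m:ℤ)+1) = ((2*m+1 : ℕ):ℤ) by push_cast; ring, Int.natAbs_natCast]; exact ht)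
      exact ht0 this
    rw [geom_sum_eq hρ, ← Complex.exp_nat_mul]
    have harg : ((2*m+1:ℕ):ℂ) * (4*(Real.pi:ℂ)*(t:ℂ)*Complex.I/(2*(m:ℂ)+1)) = ((2*t : ℤ):ℂ) * (2*(Real.pi:ℂ)*Complex.I) := by
      push_cast
      field_simp
      ring
    rw [harg, Complex.exp_int_mul_two_pi_mul_I]
    simp


lemma per_term (q k : ℕ) (x : ℂ) :
    Complex.sin x ^ (2*k) * Complex.cos (2*(q:ℂ)*x)
    = ∑ j ∈ Finset.range (2*k+1),
        (1/(2*(-4:ℂ)^k)) * ((2*k).choose j : ℂ) * (-1)^j *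
          (Complex.exp (2*((((j:ℤ)+q-k) : ℤ):ℂ)*x*Complex.I)
            + Complex.exp (2*((((j:ℤ)-q-k) : ℤ):ℂ)*x*Complex.I)) := by
  set u := Complex.exp (x*Complex.I) with hu_def
  have hu : u ≠ 0 := Complex.exp_ne_zero _
  have hinv : u * u⁻¹ = 1 := mul_inv_cancel₀ hu
  have hsin2 : Complex.sin x ^ 2 = (1 - u^2)^2 * (u⁻¹)^2 / (-4) := by
    rw [Complex.sin, show -x*Complex.I = -(x*Complex.I) by ring, Complex.exp_neg, ← hu_def]
    field_simp
    ring_nf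
    rw [Complex.I_sq]
    ring
  have hcos : Complex.cos (2*(q:ℂ)*x) = (u^(2*q) + (u⁻¹)^(2*q))/2 := by
    rw [Complex.cos, show (2*(q:ℂ)*x)*Complex.I = ((2*q:ℕ):ℂ)*(x*Complex.I) by push_cast; ring,
      show -(2*(q:ℂ)*x)*Complex.I = ((2*q:ℕ):ℂ)*(-(x*Complex.I)) by push_cast; ring,
      Complex.exp_nat_mul, Complex.exp_nat_mul, Complex.exp_neg, ← hu_def]
  have hclosed : Complex.sin x ^ (2*k) * Complex.cos (2*(q:ℂ)*x)
      = (1/(2*(-4:ℂ)^k)) * ((1-u^2)^(2*k) * ((u^(4*q)+1) * (u⁻¹)^(2*k+2*q))) := by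
    rw [pow_mul, hsin2, hcos, div_pow, mul_pow, ← pow_mul, ← pow_mul]
    field_simp
    have hinv2' : u^(2*q) * (u⁻¹)^(2*q) = 1 := by rw [← mul_pow, hinv, one_pow]
    linear_combination (-(u ^ (q * 2) * u⁻¹ ^ (k * 2) * (1 - u ^ 2) ^ (k * 2))) * hinv2'
  have hb : (1 - u^2)^(2*k) = ∑ j ∈ Finset.range (2*k+1), (-1:ℂ)^j * u^(2*j) * ((2*k).choose j : ℂ) := by
    rw [show (1:ℂ) - u^2 = (-u^2) + 1 by ring, add_pow]
    refine Finset.sum_congr rfl fun j hj => ?_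
    rw [one_pow, mul_one, neg_pow, ← pow_mul]
  have hexp1 : ∀ j : ℕ, Complex.exp (2*((((j:ℤ)+q-k) : ℤ):ℂ)*x*Complex.I)
      = u^(2*j+2*q) * (u⁻¹)^(2*k) := by
    intro j
    rw [show (2*((((j:ℤ)+q-k) : ℤ):ℂ)*x*Complex.I)
        = ((2*j+2*q:ℕ):ℂ)*(x*Complex.I) + ((2*k:ℕ):ℂ)*(-(x*Complex.I)) by push_cast; ring,
      Complex.exp_add, Complex.exp_nat_mul, Complex.exp_nat_mul, Complex.exp_neg, ← hu_def]
  have hexp2 : ∀ j : ℕ, Complex.exp (2*((((j:ℤ)-q-k) : ℤ):ℂ)*x*Complex.I)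
      = u^(2*j) * (u⁻¹)^(2*k+2*q) := by
    intro j
    rw [show (2*((((j:ℤ)-q-k) : ℤ):ℂ)*x*Complex.I)
        = ((2*j:ℕ):ℂ)*(x*Complex.I) + ((2*k+2*q:ℕ):ℂ)*(-(x*Complex.I)) by push_cast; ring,
      Complex.exp_add, Complex.exp_nat_mul, Complex.exp_nat_mul, Complex.exp_neg, ← hu_def]
  rw [hclosed, hb, Finset.sum_mul, Finset.mul_sum]
  refine Finset.sum_congr rfl fun j hj => ?_
  rw [hexp1 j, hexp2 j]
  have hinv2 : u^(2*q) * (u⁻¹)^(2*q) = 1 := by rw [← mul_pow, hinv, one_pow]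
  field_simp
  linear_combination (u^(j*2)*u^(q*2)*((2*k).choose j : ℂ)*u⁻¹^(k*2)) * hinv2

lemma aux_sum (θ : ℝ) (m q k : ℕ) (hk : k + q < 2*m+1) :
    ∑ ℓ ∈ Finset.range (2*m+1),
      Complex.sin (((θ:ℂ) + 2*(Real.pi:ℂ)*ℓ)/(2*(m:ℂ)+1)) ^ (2*k)
        * Complex.cos (2*(q:ℂ)*(((θ:ℂ)+2*(Real.pi:ℂ)*ℓ)/(2*(m:ℂ)+1)))
    = (2*(m:ℂ)+1) * (if q ≤ k then ((-1:ℂ)^q/4^k) * ((2*k).choose (k-q) : ℂ) else 0) := by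
  have step1 : ∀ ℓ ∈ Finset.range (2*m+1),
      Complex.sin (((θ:ℂ) + 2*(Real.pi:ℂ)*ℓ)/(2*(m:ℂ)+1)) ^ (2*k)
        * Complex.cos (2*(q:ℂ)*(((θ:ℂ)+2*(Real.pi:ℂ)*ℓ)/(2*(m:ℂ)+1)))
      = ∑ j ∈ Finset.range (2*k+1),
        (1/(2*(-4:ℂ)^k)) * ((2*k).choose j : ℂ) * (-1)^j *
          (Complex.exp (2*((((j:ℤ)+q-k) : ℤ):ℂ)*(((θ:ℂ) + 2*(Real.pi:ℂ)*ℓ)/(2*(m:ℂ)+1))*Complex.I)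
            + Complex.exp (2*((((j:ℤ)-q-k) : ℤ):ℂ)*(((θ:ℂ) + 2*(Real.pi:ℂ)*ℓ)/(2*(m:ℂ)+1))*Complex.I)) := by
    intro ℓ _
    exact per_term q k _
  rw [Finset.sum_congr rfl step1, Finset.sum_comm]
  have step2 : ∀ j ∈ Finset.range (2*k+1),
      (∑ ℓ ∈ Finset.range (2*m+1),
        (1/(2*(-4:ℂ)^k)) * ((2*k).choose j : ℂ) * (-1)^j *
          (Complex.exp (2*((((j:ℤ)+q-k) : ℤ):ℂ)*(((θ:ℂ) + 2*(Real.pi:ℂ)*ℓ)/(2*(m:ℂ)+1))*Complex.I)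
            + Complex.exp (2*((((j:ℤ)-q-k) : ℤ):ℂ)*(((θ:ℂ) + 2*(Real.pi:ℂ)*ℓ)/(2*(m:ℂ)+1))*Complex.I)))
      = (1/(2*(-4:ℂ)^k)) * ((2*k).choose j : ℂ) * (-1)^j *
          ((if ((j:ℤ)+q-k) = 0 then (2*(m:ℂ)+1) else 0) + (if ((j:ℤ)-q-k) = 0 then (2*(m:ℂ)+1) else 0)) := by
    intro j hj
    rw [Finset.mem_range] at hj
    rw [← Finset.mul_sum, Finset.sum_add_distrib,
      exp_sum_lem θ m ((j:ℤ)+q-k) (by omega), exp_sum_lem θ m ((j:ℤ)-q-k) (by omega)]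
  rw [Finset.sum_congr rfl step2]
  by_cases hqk : q ≤ k
  · rw [if_pos hqk]
    have step3 : ∀ j ∈ Finset.range (2*k+1),
        (1/(2*(-4:ℂ)^k)) * ((2*k).choose j : ℂ) * (-1)^j *
          ((if ((j:ℤ)+q-k) = 0 then (2*(m:ℂ)+1) else 0) + (if ((j:ℤ)-q-k) = 0 then (2*(m:ℂ)+1) else 0))
        = (if j = k-q then (1/(2*(-4:ℂ)^k)) * ((2*k).choose j : ℂ) * (-1)^j * (2*(m:ℂ)+1) else 0)
          + (if j = k+q then (1/(2*(-4:ℂ)^k)) * ((2*k).choose j : ℂ) * (-1)^j * (2*(m:ℂ)+1) else 0) := by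
      intro j hj
      simp only [show ((j:ℤ)+q-k = 0) ↔ j = k-q from by omega,
        show ((j:ℤ)-q-k = 0) ↔ j = k+q from by omega]
      split_ifs <;> ring
    rw [Finset.sum_congr rfl step3, Finset.sum_add_distrib, Finset.sum_ite_eq', Finset.sum_ite_eq',
      if_pos (Finset.mem_range.mpr (show k-q < 2*k+1 by omega)),
      if_pos (Finset.mem_range.mpr (show k+q < 2*k+1 by omega))]
    have hC : ((2*k).choose (k+q) : ℂ) = ((2*k).choose (k-q) : ℂ) := by
      norm_cast
      rw [show k - q = 2*k - (k+q) from by omega]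
      exact (Nat.choose_symm (show k+q ≤ 2*k by omega)).symm
    have hs : (-1:ℂ)^(k-q) = (-1)^(k+q) := by
      rw [show k+q = (k-q) + 2*q from by omega, pow_add, pow_mul]
      norm_num
    rw [hC, hs]
    have h4 : (-4:ℂ)^k = (-1)^k * 4^k := by rw [show (-4:ℂ) = -1*4 by ring, mul_pow]
    have hsk : (-1:ℂ)^(k+q) = (-1)^k * (-1)^q := pow_add _ _ _
    rw [h4, hsk]
    have h1 : ((-1:ℂ)^k) ≠ 0 := by
      apply pow_ne_zero; norm_num
    have h2 : ((4:ℂ)^k) ≠ 0 := by apply pow_ne_zero; norm_num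
    field_simp
    ring
  · rw [if_neg hqk]
    rw [Finset.sum_eq_zero, mul_zero]
    intro j hj
    rw [Finset.mem_range] at hj
    rw [if_neg (by omega), if_neg (by omega)]
    ring


theorem stmt_18 (θ : ℝ) (m q k : ℕ) (hq : 2 * q < 2 * m + 1) :
    (q ≤ k → k < 2 * m + 1 - q →
      (1 / (2 * m + 1 : ℝ)) * ∑ ℓ ∈ Finset.range (2 * m + 1),
          (Real.sin ((θ + 2 * Real.pi * ℓ) / (2 * m + 1))) ^ (2 * k)
            * Real.cos (2 * q * (θ + 2 * Real.pi * ℓ) / (2 * m + 1))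
        = ((-1) ^ q / 4 ^ k) * (Nat.choose (2 * k) (k - q) : ℝ)) ∧
    (k < q →
      (1 / (2 * m + 1 : ℝ)) * ∑ ℓ ∈ Finset.range (2 * m + 1),
          (Real.sin ((θ + 2 * Real.pi * ℓ) / (2 * m + 1))) ^ (2 * k)
            * Real.cos (2 * q * (θ + 2 * Real.pi * ℓ) / (2 * m + 1)) = 0) := by
  have hN : (2*(m:ℝ)+1) ≠ 0 := by positivity
  have main : k + q < 2*m+1 →
      (∑ ℓ ∈ Finset.range (2*m+1),
        (Real.sin ((θ + 2*Real.pi*ℓ)/(2*m+1)))^(2*k) * Real.cos (2*q*(θ+2*Real.pi*ℓ)/(2*m+1)))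
      = (2*(m:ℝ)+1) * (if q ≤ k then ((-1:ℝ)^q/4^k)*((2*k).choose (k-q) : ℝ) else 0) := by
    intro h
    have hx := aux_sum θ m q k h
    have hcast : ((∑ ℓ ∈ Finset.range (2*m+1),
        (Real.sin ((θ + 2*Real.pi*ℓ)/(2*m+1)))^(2*k) * Real.cos (2*q*(θ+2*Real.pi*ℓ)/(2*m+1)) : ℝ) : ℂ)
        = ∑ ℓ ∈ Finset.range (2*m+1),
          Complex.sin (((θ:ℂ) + 2*(Real.pi:ℂ)*ℓ)/(2*(m:ℂ)+1)) ^ (2*k)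
            * Complex.cos (2*(q:ℂ)*(((θ:ℂ)+2*(Real.pi:ℂ)*ℓ)/(2*(m:ℂ)+1))) := by
      push_cast
      refine Finset.sum_congr rfl fun ℓ _ => ?_
      congr 2
      ring
    apply Complex.ofReal_injective
    rw [hcast, hx]
    by_cases hqk : q ≤ k
    · rw [if_pos hqk]
      push_cast [if_pos hqk]
      ring
    · rw [if_neg hqk]
      push_cast [if_neg hqk]
      ring
  constructor
  · intro h1 h2
    have h3 : k + q < 2*m+1 := by omega
    rw [main h3, if_pos h1]
    field_simp
  · intro h1
    have h3 : k + q < 2*m+1 := by omega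
    rw [main h3, if_neg (by omega)]
    simp
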